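/- The minimal decompositions of a triangulated sphere T are exactly the triples ({T₀}, T \ {T₀}, ∅) where T₀ is a triangle of T and some vertex of T not contained in T₀ has maximal valence among the vertices of T. In particular, the only planar minimal genus-surface is a single triangle. -/

import Mathlib

namespace Tri

/-- A (pure 2-dimensional) simplicial complex, given by its set of triangles
(each triangle is a 3-element finset of vertex labels). -/
abbrev Complex := Finset (Finset ℕ)

/-- The vertices of a complex. -/
def vertices (K : Complex) : Finset ℕ := K.biUnion id

/-- The edges of a complex: 2-element subsets of triangles. -/
def edges (K : Complex) : Finset (Finset ℕ) := K.biUnion fun t => t.powersetCard 2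

/-- The valence of a vertex: the number of triangles containing it. -/
def valence (K : Complex) (v : ℕ) : ℕ := (K.filter (fun t => v ∈ t)).card

/-- The maximal vertex-valence of a complex. -/
def mv (K : Complex) : ℕ := (vertices K).sup (valence K)

/-- Euler characteristic V - E + T. -/
def eulerChar (K : Complex) : ℤ :=
  ((vertices K).card : ℤ) - (edges K).card + K.card

/-- Two triangles of `K` both containing `v` and sharing an edge. -/
def adjAt (K : Complex) (v : ℕ) (t₁ t₂ : Finset ℕ) : Prop :=
  t₁ ∈ K ∧ t₂ ∈ K ∧ v ∈ t₁ ∧ v ∈ t₂ ∧ (t₁ ∩ t₂).card = 2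

/-- Two triangles of `K` sharing an edge. -/
def adj (K : Complex) (t₁ t₂ : Finset ℕ) : Prop :=
  t₁ ∈ K ∧ t₂ ∈ K ∧ (t₁ ∩ t₂).card = 2

/-- A triangulation of a connected compact surface, possibly with boundary:
every triangle has 3 vertices, every edge lies in at most two triangles,
the triangles around every vertex are connected via edges through that vertex
(so every vertex link is a path or a circle), and the complex is connected. -/
structure IsSurface (K : Complex) : Prop where
  nonempty : K.Nonempty
  card3 : ∀ t ∈ K, t.card = 3
  edge_le : ∀ e ∈ edges K, (K.filter (fun t => e ⊆ t)).card ≤ 2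
  link_conn : ∀ v, ∀ t₁ ∈ K, ∀ t₂ ∈ K, v ∈ t₁ → v ∈ t₂ →
    Relation.ReflTransGen (adjAt K v) t₁ t₂
  conn : ∀ t₁ ∈ K, ∀ t₂ ∈ K, Relation.ReflTransGen (adj K) t₁ t₂

/-- A triangulation of a closed (connected compact) surface: every edge lies
in exactly two triangles. -/
def IsClosedSurface (K : Complex) : Prop :=
  IsSurface K ∧ ∀ e ∈ edges K, (K.filter (fun t => e ⊆ t)).card = 2

/-- Boundary edges: edges lying in exactly one triangle. -/
def bdryEdges (K : Complex) : Finset (Finset ℕ) :=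
  (edges K).filter (fun e => (K.filter (fun t => e ⊆ t)).card = 1)

/-- Boundary vertices. -/
def bdryVertices (K : Complex) : Finset ℕ := (bdryEdges K).biUnion id

/-- Interior vertices. -/
def intVertices (K : Complex) : Finset ℕ := vertices K \ bdryVertices K

/-- A triangulated disc: a connected compact surface with nonempty boundary and
Euler characteristic 1. -/
def IsDisc (K : Complex) : Prop :=
  IsSurface K ∧ eulerChar K = 1 ∧ (bdryEdges K).Nonempty

/-- Two edges sharing a vertex. -/
def edgeAdj (E : Complex) (e₁ e₂ : Finset ℕ) : Prop :=
  e₁ ∈ E ∧ e₂ ∈ E ∧ (e₁ ∩ e₂).Nonempty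

/-- A set of edges forming a triangulated circle. -/
def IsCircle (E : Complex) : Prop :=
  E.Nonempty ∧ (∀ e ∈ E, e.card = 2) ∧
  (∀ v ∈ E.biUnion id, (E.filter (fun e => v ∈ e)).card = 2) ∧
  ∀ e₁ ∈ E, ∀ e₂ ∈ E, Relation.ReflTransGen (edgeAdj E) e₁ e₂

/-- Simplicial isomorphism (re-labeling). -/
def Iso (K₁ K₂ : Complex) : Prop :=
  ∃ f : ℕ → ℕ, Set.InjOn f (vertices K₁) ∧ K₁.image (Finset.image f) = K₂

/-- The boundary of the tetrahedron. -/
def tetra : Complex := {{1,2,3},{1,2,4},{1,3,4},{2,3,4}}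

/-- The boundary of the octahedron. -/
def octa : Complex := {{1,2,3},{1,2,4},{1,3,5},{1,4,5},{2,3,6},{2,4,6},{3,5,6},{4,5,6}}

/-- The vertices of the link of a vertex. -/
def linkV (K : Complex) (v : ℕ) : Finset ℕ :=
  ((K.filter (fun t => v ∈ t)).biUnion id).erase v

/-- The result of the inverse T-move removing the vertex `v`. -/
def invT (K : Complex) (v : ℕ) : Complex :=
  insert (linkV K v) (K.filter (fun t => v ∉ t))

/-- `K'` is obtained from `K` by an inverse T-move: a 3-valent vertex whose
link does not bound a triangle is removed. -/
def InvTStep (K K' : Complex) : Prop :=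
  ∃ v, valence K v = 3 ∧ linkV K v ∉ K ∧ K' = invT K v

/-- A root: a closed triangulated surface admitting no inverse T-move. -/
def IsRoot (K : Complex) : Prop := IsClosedSurface K ∧ ∀ K', ¬ InvTStep K K'

/-- `R` is a root of `K`: obtained from `K` by inverse T-moves, with no
further inverse T-move applicable. -/
def IsRootOf (R K : Complex) : Prop :=
  Relation.ReflTransGen InvTStep K R ∧ ∀ R', ¬ InvTStep R R'

/-- The directed edges of an ordered triangle. -/
def dedges (p : ℕ × ℕ × ℕ) : Finset (ℕ × ℕ) := {(p.1, p.2.1), (p.2.1, p.2.2), (p.2.2, p.1)}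

/-- Orientability: a coherent choice of cyclic orders on the triangles,
i.e. no directed edge is shared by two distinct triangles. -/
def Orientable (K : Complex) : Prop :=
  ∃ o : Finset ℕ → ℕ × ℕ × ℕ,
    (∀ t ∈ K, ({(o t).1, (o t).2.1, (o t).2.2} : Finset ℕ) = t) ∧
    ∀ t₁ ∈ K, ∀ t₂ ∈ K, t₁ ≠ t₂ → ∀ p ∈ dedges (o t₁), p ∉ dedges (o t₂)

/-- Two closed triangulated surfaces triangulate the same surface iff they
have the same Euler characteristic and the same orientability. -/
def SameSurface (K₁ K₂ : Complex) : Prop :=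
  eulerChar K₁ = eulerChar K₂ ∧ (Orientable K₁ ↔ Orientable K₂)

/-- The intersection of two subcomplexes is a triangulated circle or empty. -/
def CircleInter (A B : Complex) : Prop :=
  (IsCircle (edges A ∩ edges B) ∨ edges A ∩ edges B = ∅) ∧
  vertices A ∩ vertices B = (edges A ∩ edges B).biUnion id

/-- A decomposition `(G, D, Ds)` of a closed triangulated surface `K`. -/
structure IsDecomp (K G D : Complex) (Ds : Finset Complex) : Prop where
  closed : IsClosedSurface K
  subG : G ⊆ K
  subD : D ⊆ K
  subDs : ∀ Di ∈ Ds, Di ⊆ K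
  surfG : IsSurface G
  discD : IsDisc D
  discDs : ∀ Di ∈ Ds, IsDisc Di
  maxv : ∃ v ∈ intVertices D, valence K v = mv K
  cover : G ∪ D ∪ Ds.sup id = K
  disjGD : Disjoint G D
  disjGDs : ∀ Di ∈ Ds, Disjoint G Di
  disjDDs : ∀ Di ∈ Ds, Disjoint D Di
  disjDsDs : ∀ Di ∈ Ds, ∀ Dj ∈ Ds, Di ≠ Dj → Disjoint Di Dj
  interGD : CircleInter G D
  interGDs : ∀ Di ∈ Ds, CircleInter G Di
  interDDs : ∀ Di ∈ Ds, CircleInter D Di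
  interDsDs : ∀ Di ∈ Ds, ∀ Dj ∈ Ds, Di ≠ Dj → CircleInter Di Dj

/-- A minimal decomposition: the genus-surface has the fewest triangles. -/
def IsMinDecomp (K G D : Complex) (Ds : Finset Complex) : Prop :=
  IsDecomp K G D Ds ∧ ∀ G' D' Ds', IsDecomp K G' D' Ds' → G.card ≤ G'.card


/-! ### Basic lemmas -/

lemma mem_vertices {K : Complex} {v : ℕ} : v ∈ vertices K ↔ ∃ t ∈ K, v ∈ t := by
  simp [vertices]

lemma mem_edges {K : Complex} {e : Finset ℕ} :
    e ∈ edges K ↔ ∃ t ∈ K, e ⊆ t ∧ e.card = 2 := by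
  simp [edges, Finset.mem_powersetCard]

lemma vertices_mono {A B : Complex} (h : A ⊆ B) : vertices A ⊆ vertices B :=
  Finset.biUnion_subset_biUnion_of_subset_left _ h

lemma edges_mono {A B : Complex} (h : A ⊆ B) : edges A ⊆ edges B :=
  Finset.biUnion_subset_biUnion_of_subset_left _ h

lemma edge_mem {K : Complex} {t e : Finset ℕ} (ht : t ∈ K) (he : e ⊆ t)
    (hc : e.card = 2) : e ∈ edges K :=
  mem_edges.2 ⟨t, ht, he, hc⟩

/-- In a closed surface, each edge of a triangle lies in exactly one other triangle. -/
lemma exists_other {K : Complex} (h : IsClosedSurface K) {t e : Finset ℕ}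
    (ht : t ∈ K) (he : e ⊆ t) (hc : e.card = 2) :
    ∃ t' ∈ K, t' ≠ t ∧ e ⊆ t' := by
  have h2 := h.2 e (edge_mem ht he hc)
  have htm : t ∈ K.filter (fun s => e ⊆ s) := Finset.mem_filter.2 ⟨ht, he⟩
  obtain ⟨t', ht', hne⟩ := Finset.exists_mem_ne (by rw [h2]; omega) t
  exact ⟨t', (Finset.mem_filter.1 ht').1, hne, (Finset.mem_filter.1 ht').2⟩

/-- Walks avoiding a single node, given that nodes adjacent to it are connected
avoiding it. -/
lemma reflTransGen_avoid {α : Type*} {r : α → α → Prop} {x u v : α}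
    (hxx : ¬ r x x)
    (H : ∀ a b, a ≠ x → b ≠ x → r a x → r x b →
      Relation.ReflTransGen (fun s t => s ≠ x ∧ t ≠ x ∧ r s t) a b)
    (hu : u ≠ x) (hv : v ≠ x)
    (huv : Relation.ReflTransGen r u v) :
    Relation.ReflTransGen (fun s t => s ≠ x ∧ t ≠ x ∧ r s t) u v := by
  set r' : α → α → Prop := fun s t => s ≠ x ∧ t ≠ x ∧ r s t with hr'
  suffices h : ∀ w, Relation.ReflTransGen r u w →
      (w ≠ x → Relation.ReflTransGen r' u w) ∧
      (w = x → ∃ a, a ≠ x ∧ r a x ∧ Relation.ReflTransGen r' u a) from (h v huv).1 hv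
  intro w hw
  induction hw with
  | refl => exact ⟨fun _ => .refl, fun hx' => absurd hx' hu⟩
  | @tail b c hub hbc ih =>
    constructor
    · intro hcx
      by_cases hbx : b = x
      · subst hbx
        obtain ⟨a, hax, harx, hua⟩ := ih.2 rfl
        exact hua.trans (H a c hax hcx harx hbc)
      · exact (ih.1 hbx).tail ⟨hbx, hcx, hbc⟩
    · intro hcx
      rw [hcx] at hbc
      by_cases hbx : b = x
      · subst hbx; exact absurd hbc hxx
      · exact ⟨b, hbx, hbc, ih.1 hbx⟩

/-- A connected 2-regular graph stays connected after removing a node: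
the two neighbours of `x` are connected avoiding `x`. -/
lemma degree_two_remove {α : Type*} [DecidableEq α] {S : Finset α} {r : α → α → Prop}
    [DecidableRel r]
    (hsym : ∀ a b, r a b → r b a) (hirr : ∀ a, ¬ r a a)
    (hdeg : ∀ s ∈ S, (S.filter (r s)).card = 2)
    {x a b : α} (hx : x ∈ S) (haS : a ∈ S) (hbS : b ∈ S) (ha : r x a) (hb : r x b) :
    Relation.ReflTransGen (fun s t => s ≠ x ∧ t ≠ x ∧ s ∈ S ∧ t ∈ S ∧ r s t) a b := by
  classical
  set r' : α → α → Prop := fun s t => s ≠ x ∧ t ≠ x ∧ s ∈ S ∧ t ∈ S ∧ r s t with hr'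
  have hax : a ≠ x := fun h => hirr x (h ▸ ha)
  have hbx : b ≠ x := fun h => hirr x (h ▸ hb)
  by_cases hab : a = b
  · subst hab; exact .refl
  have hNx : S.filter (r x) = {a, b} := by
    refine (Finset.eq_of_subset_of_card_le ?_ ?_).symm
    · intro t ht
      rcases Finset.mem_insert.1 ht with rfl | ht
      · exact Finset.mem_filter.2 ⟨haS, ha⟩
      · rw [Finset.mem_singleton] at ht
        subst ht; exact Finset.mem_filter.2 ⟨hbS, hb⟩
    · rw [hdeg x hx, Finset.card_insert_of_notMem (by simpa using hab), Finset.card_singleton]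
  set C := (S.erase x).filter (fun s => Relation.ReflTransGen r' a s) with hC
  have haC : a ∈ C :=
    Finset.mem_filter.2 ⟨Finset.mem_erase.2 ⟨hax, haS⟩, Relation.ReflTransGen.refl⟩
  suffices hbC : b ∈ C from (Finset.mem_filter.1 hbC).2
  by_contra hbC
  have hclose : ∀ s ∈ C, ∀ t ∈ S, t ≠ x → r s t → t ∈ C := by
    intro s hs t htS htx hrst
    obtain ⟨hsE, hsa⟩ := Finset.mem_filter.1 hs
    obtain ⟨hsx, hsS⟩ := Finset.mem_erase.1 hsE
    exact Finset.mem_filter.2 ⟨Finset.mem_erase.2 ⟨htx, htS⟩,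
      hsa.tail ⟨hsx, htx, hsS, htS, hrst⟩⟩
  have hdegC : ∀ s ∈ C, (C.filter (r s)).card = (if s = a then 1 else 2) := by
    intro s hs
    obtain ⟨hsE, hsa⟩ := Finset.mem_filter.1 hs
    obtain ⟨hsx, hsS⟩ := Finset.mem_erase.1 hsE
    by_cases hsa' : s = a
    · subst hsa'
      rw [if_pos rfl]
      have hEq : C.filter (r s) = (S.filter (r s)).erase x := by
        ext t
        simp only [Finset.mem_filter, Finset.mem_erase]
        constructor
        · rintro ⟨htC, hrt⟩
          obtain ⟨htx, htS⟩ := Finset.mem_erase.1 (Finset.mem_filter.1 htC).1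
          exact ⟨htx, htS, hrt⟩
        · rintro ⟨htx, htS, hrt⟩
          exact ⟨hclose s hs t htS htx hrt, hrt⟩
      rw [hEq, Finset.card_erase_of_mem (Finset.mem_filter.2 ⟨hx, hsym x s ha⟩),
        hdeg s hsS]
    · rw [if_neg hsa']
      have hEq : C.filter (r s) = S.filter (r s) := by
        ext t
        simp only [Finset.mem_filter]
        constructor
        · rintro ⟨htC, hrt⟩
          exact ⟨(Finset.mem_erase.1 (Finset.mem_filter.1 htC).1).2, hrt⟩
        · rintro ⟨htS, hrt⟩
          have htx : t ≠ x := by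
            intro heq
            have hmem : s ∈ S.filter (r x) := Finset.mem_filter.2 ⟨hsS, heq ▸ hsym s t hrt⟩
            rw [hNx] at hmem
            rcases Finset.mem_insert.1 hmem with h' | h'
            · exact hsa' h'
            · rw [Finset.mem_singleton] at h'
              exact hbC (h' ▸ hs)
          exact ⟨hclose s hs t htS htx hrt, hrt⟩
      rw [hEq, hdeg s hsS]
  set P := (C ×ˢ C).filter (fun p => r p.1 p.2) with hP
  have heven : 2 ∣ P.card := by
    have h0 : ((P.card : ZMod 2)) = 0 := by
      rw [Finset.card_eq_sum_ones, Nat.cast_sum]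
      refine Finset.sum_involution (fun p _ => p.swap) (fun p hp => by decide)
        (fun p hp h1 => ?_) (fun p hp => ?_) (fun p hp => Prod.swap_swap p)
      · intro hswap
        obtain ⟨hpm, hpr⟩ := Finset.mem_filter.1 hp
        have : p.1 = p.2 := by
          have := congrArg Prod.fst hswap
          simpa [Prod.swap] using this.symm
        exact hirr p.1 (by rw [this] at hpr ⊢; exact hpr)
      · obtain ⟨hpm, hpr⟩ := Finset.mem_filter.1 hp
        obtain ⟨h1, h2⟩ := Finset.mem_product.1 hpm
        exact Finset.mem_filter.2 ⟨Finset.mem_product.2 ⟨h2, h1⟩, hsym _ _ hpr⟩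
    exact (ZMod.natCast_eq_zero_iff _ 2).1 h0
  have hPcard : P.card = ∑ s ∈ C, (C.filter (r s)).card := by
    rw [hP, Finset.card_filter, Finset.sum_product]
    exact Finset.sum_congr rfl fun s _ => (Finset.card_filter _ _).symm
  have hsum : ∑ s ∈ C, (C.filter (r s)).card = 2 * (C.card - 1) + 1 := by
    rw [Finset.sum_congr rfl hdegC, Finset.sum_eq_sum_sdiff_singleton_add haC, if_pos rfl]
    have h2 : ∀ s ∈ C \ {a}, (if s = a then (1:ℕ) else 2) = 2 := fun s hs =>
      if_neg (by simpa using (Finset.mem_sdiff.1 hs).2)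
    rw [Finset.sum_congr rfl h2, Finset.sum_const, smul_eq_mul,
      Finset.card_sdiff_of_subset (by simpa using haC), Finset.card_singleton, mul_comm]
  have hC1 : 1 ≤ C.card := Finset.card_pos.2 ⟨a, haC⟩
  omega

/-- Uniqueness of the second triangle across an edge in a closed surface. -/
lemma other_unique {K : Complex} (h : IsClosedSurface K) {t e t' t'' : Finset ℕ}
    (ht : t ∈ K) (he : e ⊆ t) (hc : e.card = 2)
    (h' : t' ∈ K) (h'e : e ⊆ t') (h'ne : t' ≠ t)
    (h'' : t'' ∈ K) (h''e : e ⊆ t'') (h''ne : t'' ≠ t) : t' = t'' := by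
  by_contra hne
  have hsub : {t, t', t''} ⊆ K.filter (fun s => e ⊆ s) := by
    intro s hs
    simp only [Finset.mem_insert, Finset.mem_singleton] at hs
    rcases hs with rfl | rfl | rfl <;> exact Finset.mem_filter.2 ⟨by assumption, by assumption⟩
  have hcard : ({t, t', t''} : Finset (Finset ℕ)).card = 3 := by
    rw [Finset.card_insert_of_notMem (by simp [Ne.symm h'ne, Ne.symm h''ne]),
      Finset.card_insert_of_notMem (by simpa using hne), Finset.card_singleton]
  have := Finset.card_le_card hsub
  rw [hcard, h.2 e (edge_mem ht he hc)] at this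
  omega

/-- In a closed surface, every triangle containing `v` has exactly two
edge-neighbours containing `v`. -/
lemma star_deg {K : Complex} (h : IsClosedSurface K) {v : ℕ} {t : Finset ℕ}
    (ht : t ∈ K) (hv : v ∈ t) :
    ((K.filter (fun s => v ∈ s)).filter (fun s => (t ∩ s).card = 2)).card = 2 := by
  classical
  have h3 : t.card = 3 := h.1.card3 t ht
  have herase : (t.erase v).card = 2 := by rw [Finset.card_erase_of_mem hv, h3]
  obtain ⟨a, b, hab, hE⟩ := Finset.card_eq_two.1 herase
  have haE : a ∈ t.erase v := by rw [hE]; simp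
  have hbE : b ∈ t.erase v := by rw [hE]; simp
  have hav : a ≠ v := Finset.ne_of_mem_erase haE
  have hbv : b ≠ v := Finset.ne_of_mem_erase hbE
  have hat : a ∈ t := Finset.mem_of_mem_erase haE
  have hbt : b ∈ t := Finset.mem_of_mem_erase hbE
  have he₁c : ({v, a} : Finset ℕ).card = 2 := by
    rw [Finset.card_insert_of_notMem (by simpa using hav.symm), Finset.card_singleton]
  have he₂c : ({v, b} : Finset ℕ).card = 2 := by
    rw [Finset.card_insert_of_notMem (by simpa using hbv.symm), Finset.card_singleton]
  have he₁s : ({v, a} : Finset ℕ) ⊆ t := by intro z hz; simp at hz; rcases hz with rfl|rfl <;> assumption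
  have he₂s : ({v, b} : Finset ℕ) ⊆ t := by intro z hz; simp at hz; rcases hz with rfl|rfl <;> assumption
  obtain ⟨t₁, ht₁K, ht₁ne, ht₁e⟩ := exists_other h ht he₁s he₁c
  obtain ⟨t₂, ht₂K, ht₂ne, ht₂e⟩ := exists_other h ht he₂s he₂c
  have htE : t = insert v ({a, b} : Finset ℕ) := by rw [← hE, Finset.insert_erase hv]
  have ht₁₂ : t₁ ≠ t₂ := by
    rintro rfl
    have hsub : t ⊆ t₁ := by
      rw [htE]
      intro z hz
      simp only [Finset.mem_insert, Finset.mem_singleton] at hz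
      rcases hz with rfl | rfl | rfl
      · exact ht₁e (by simp)
      · exact ht₁e (by simp)
      · exact ht₂e (by simp)
    exact ht₁ne (Finset.eq_of_subset_of_card_le hsub
      (by rw [h3, h.1.card3 t₁ ht₁K])).symm
  -- the two neighbours have intersection of size 2 with t
  have hnbr : ∀ t' , t' ∈ K → t' ≠ t → ({v, a} ⊆ t' ∨ {v, b} ⊆ t') → (t ∩ t').card = 2 := by
    intro t' ht'K ht'ne hsub
    have hge : 2 ≤ (t ∩ t').card := by
      rcases hsub with hs | hs
      · calc 2 = ({v,a} : Finset ℕ).card := he₁c.symm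
          _ ≤ _ := Finset.card_le_card (Finset.subset_inter he₁s hs)
      · calc 2 = ({v,b} : Finset ℕ).card := he₂c.symm
          _ ≤ _ := Finset.card_le_card (Finset.subset_inter he₂s hs)
    have hle : (t ∩ t').card ≤ 3 := le_trans (Finset.card_le_card Finset.inter_subset_left) h3.le
    have hne3 : (t ∩ t').card ≠ 3 := by
      intro h3'
      have : t ⊆ t' := by
        have : t ∩ t' = t := Finset.eq_of_subset_of_card_le Finset.inter_subset_left
          (by rw [h3', h3])
        rw [← this]; exact Finset.inter_subset_right
      exact ht'ne (Finset.eq_of_subset_of_card_le this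
        (by rw [h3, h.1.card3 t' ht'K])).symm
    omega
  have hset : (K.filter (fun s => v ∈ s)).filter (fun s => (t ∩ s).card = 2) = {t₁, t₂} := by
    ext t'
    simp only [Finset.mem_filter, Finset.mem_insert, Finset.mem_singleton]
    constructor
    · rintro ⟨⟨ht'K, hvt'⟩, hint⟩
      have ht'ne : t' ≠ t := by
        rintro rfl
        rw [Finset.inter_self, h3] at hint; omega
      have hvint : v ∈ t ∩ t' := Finset.mem_inter.2 ⟨hv, hvt'⟩
      have hec : ((t ∩ t').erase v).card = 1 := by
        rw [Finset.card_erase_of_mem hvint, hint]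
      obtain ⟨c, hc⟩ := Finset.card_eq_one.1 hec
      have hcmem : c ∈ (t ∩ t').erase v := by rw [hc]; simp
      have hcab : c ∈ t.erase v := Finset.mem_erase.2
        ⟨Finset.ne_of_mem_erase hcmem,
         (Finset.mem_inter.1 (Finset.mem_of_mem_erase hcmem)).1⟩
      have hint' : t ∩ t' = {v, c} := by
        rw [← Finset.insert_erase hvint, hc]
      have hsub' : ({v, c} : Finset ℕ) ⊆ t' := by
        rw [← hint']; exact Finset.inter_subset_right
      rw [hE] at hcab
      rcases Finset.mem_insert.1 hcab with rfl | hcb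
      · exact Or.inl (other_unique h ht he₁s he₁c ht'K hsub' ht'ne ht₁K ht₁e ht₁ne)
      · rw [Finset.mem_singleton] at hcb
        subst hcb
        exact Or.inr (other_unique h ht he₂s he₂c ht'K hsub' ht'ne ht₂K ht₂e ht₂ne)
    · rintro (rfl | rfl)
      · exact ⟨⟨ht₁K, ht₁e (by simp)⟩, hnbr t' ht₁K ht₁ne (Or.inl ht₁e)⟩
      · exact ⟨⟨ht₂K, ht₂e (by simp)⟩, hnbr t' ht₂K ht₂ne (Or.inr ht₂e)⟩
  rw [hset, Finset.card_insert_of_notMem (by simpa using ht₁₂), Finset.card_singleton]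

lemma adjAt_symm {K : Complex} {v : ℕ} {s t : Finset ℕ} (h : adjAt K v s t) :
    adjAt K v t s :=
  ⟨h.2.1, h.1, h.2.2.2.1, h.2.2.1, by rw [Finset.inter_comm]; exact h.2.2.2.2⟩

lemma adjAt_erase_iff {K : Complex} {T₀ : Finset ℕ} {v : ℕ} {t t' : Finset ℕ} :
    adjAt (K.erase T₀) v t t' ↔ t ≠ T₀ ∧ t' ≠ T₀ ∧ adjAt K v t t' := by
  unfold adjAt
  simp only [Finset.mem_erase]
  tauto

/-- The link of any vertex stays connected after removing one triangle. -/
lemma link_conn_erase {K : Complex} (h : IsClosedSurface K) (T₀ : Finset ℕ) (v : ℕ)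
    {t₁ t₂ : Finset ℕ} (h₁ : t₁ ∈ K.erase T₀) (h₂ : t₂ ∈ K.erase T₀)
    (hv₁ : v ∈ t₁) (hv₂ : v ∈ t₂) :
    Relation.ReflTransGen (adjAt (K.erase T₀) v) t₁ t₂ := by
  classical
  obtain ⟨h₁ne, h₁K⟩ := Finset.mem_erase.1 h₁
  obtain ⟨h₂ne, h₂K⟩ := Finset.mem_erase.1 h₂
  have hirr : ∀ a, ¬ adjAt K v a a := by
    rintro a ⟨haK, -, -, -, hc⟩
    rw [Finset.inter_self, h.1.card3 a haK] at hc
    omega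
  have hsym : ∀ a b, adjAt K v a b → adjAt K v b a := fun a b => adjAt_symm
  have hdeg : ∀ s ∈ K.filter (fun t => v ∈ t),
      ((K.filter (fun t => v ∈ t)).filter (adjAt K v s)).card = 2 := by
    intro s hs
    obtain ⟨hsK, hvs⟩ := Finset.mem_filter.1 hs
    have : (K.filter (fun t => v ∈ t)).filter (adjAt K v s)
        = (K.filter (fun t => v ∈ t)).filter (fun t => (s ∩ t).card = 2) := by
      apply Finset.filter_congr
      intro t' ht'
      obtain ⟨ht'K, hvt'⟩ := Finset.mem_filter.1 ht'
      constructor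
      · exact fun ha => ha.2.2.2.2
      · exact fun hc => ⟨hsK, ht'K, hvs, hvt', hc⟩
    rw [this]
    exact star_deg h hsK hvs
  have key := reflTransGen_avoid (r := adjAt K v) (x := T₀) (hirr T₀)
    (fun a b haT hbT haadj hTb => by
      obtain ⟨haK, hTK, hva, hvT, hca⟩ := haadj
      obtain ⟨-, hbK, -, hvb, hcb⟩ := hTb
      have hres := degree_two_remove (S := K.filter (fun t => v ∈ t)) (r := adjAt K v)
        hsym hirr hdeg (Finset.mem_filter.2 ⟨hTK, hvT⟩)
        (Finset.mem_filter.2 ⟨haK, hva⟩) (Finset.mem_filter.2 ⟨hbK, hvb⟩)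
        (adjAt_symm ⟨haK, hTK, hva, hvT, hca⟩) ⟨hTK, hbK, hvT, hvb, hcb⟩
      exact Relation.ReflTransGen.mono (fun s t hst => ⟨hst.1, hst.2.1, hst.2.2.2.2⟩) _ _ hres)
    h₁ne h₂ne (h.1.link_conn v t₁ h₁K t₂ h₂K hv₁ hv₂)
  exact Relation.ReflTransGen.mono (fun s t hst => adjAt_erase_iff.2 hst) _ _ key

/-- The complex stays connected after removing one triangle. -/
lemma conn_erase {K : Complex} (h : IsClosedSurface K) {T₀ : Finset ℕ} (hT : T₀ ∈ K)
    {t₁ t₂ : Finset ℕ} (h₁ : t₁ ∈ K.erase T₀) (h₂ : t₂ ∈ K.erase T₀) :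
    Relation.ReflTransGen (adj (K.erase T₀)) t₁ t₂ := by
  classical
  obtain ⟨h₁ne, h₁K⟩ := Finset.mem_erase.1 h₁
  obtain ⟨h₂ne, h₂K⟩ := Finset.mem_erase.1 h₂
  have key := reflTransGen_avoid (r := adj K) (x := T₀)
    (by
      rintro ⟨hTK, -, hc⟩
      rw [Finset.inter_self, h.1.card3 T₀ hTK] at hc
      omega)
    (fun a b haT hbT haadj hTb => by
      obtain ⟨haK, hTK, hca⟩ := haadj
      obtain ⟨-, hbK, hcb⟩ := hTb
      have hXY : 1 ≤ ((a ∩ T₀) ∩ (T₀ ∩ b)).card := by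
        have hsub : (a ∩ T₀) ∪ (T₀ ∩ b) ⊆ T₀ :=
          Finset.union_subset Finset.inter_subset_right Finset.inter_subset_left
        have h3 : ((a ∩ T₀) ∪ (T₀ ∩ b)).card ≤ 3 :=
          le_trans (Finset.card_le_card hsub) (h.1.card3 T₀ hTK).le
        have := Finset.card_union_add_card_inter (a ∩ T₀) (T₀ ∩ b)
        omega
      obtain ⟨w, hw⟩ := Finset.card_pos.1 hXY
      simp only [Finset.mem_inter] at hw
      have hres := link_conn_erase h T₀ w (Finset.mem_erase.2 ⟨haT, haK⟩)
        (Finset.mem_erase.2 ⟨hbT, hbK⟩) hw.1.1 hw.2.2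
      exact Relation.ReflTransGen.mono (fun s t hst => by
        obtain ⟨hsE, htE, -, -, hc⟩ := hst
        exact ⟨(Finset.mem_erase.1 hsE).1, (Finset.mem_erase.1 htE).1,
          (Finset.mem_erase.1 hsE).2, (Finset.mem_erase.1 htE).2, hc⟩) _ _ hres)
    h₁ne h₂ne (h.1.conn t₁ h₁K t₂ h₂K)
  exact Relation.ReflTransGen.mono (fun s t hst =>
    ⟨Finset.mem_erase.2 ⟨hst.1, hst.2.2.1⟩, Finset.mem_erase.2 ⟨hst.2.1, hst.2.2.2.1⟩,
      hst.2.2.2.2⟩) _ _ key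

lemma vertices_erase {K : Complex} (h : IsClosedSurface K) {T₀ : Finset ℕ} (hT : T₀ ∈ K) :
    vertices (K.erase T₀) = vertices K := by
  apply Finset.Subset.antisymm (vertices_mono (Finset.erase_subset _ _))
  intro v hv
  obtain ⟨t, htK, hvt⟩ := mem_vertices.1 hv
  by_cases hne : t = T₀
  · subst hne
    have herase : (t.erase v).card = 2 := by
      rw [Finset.card_erase_of_mem hvt, h.1.card3 t htK]
    obtain ⟨a, ha⟩ := Finset.card_pos.1 (by omega : 0 < (t.erase v).card)
    have hav : a ≠ v := Finset.ne_of_mem_erase ha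
    have hsub : ({v, a} : Finset ℕ) ⊆ t := by
      intro z hz; simp only [Finset.mem_insert, Finset.mem_singleton] at hz
      rcases hz with rfl | rfl
      · exact hvt
      · exact Finset.mem_of_mem_erase ha
    have hc2 : ({v, a} : Finset ℕ).card = 2 := by
      rw [Finset.card_insert_of_notMem (by simpa using hav.symm), Finset.card_singleton]
    obtain ⟨t', ht'K, ht'ne, ht'e⟩ := exists_other h htK hsub hc2
    exact mem_vertices.2 ⟨t', Finset.mem_erase.2 ⟨ht'ne, ht'K⟩, ht'e (by simp)⟩
  · exact mem_vertices.2 ⟨t, Finset.mem_erase.2 ⟨hne, htK⟩, hvt⟩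

lemma edges_erase {K : Complex} (h : IsClosedSurface K) {T₀ : Finset ℕ} (hT : T₀ ∈ K) :
    edges (K.erase T₀) = edges K := by
  apply Finset.Subset.antisymm (edges_mono (Finset.erase_subset _ _))
  intro e he
  obtain ⟨t, htK, het, hec⟩ := mem_edges.1 he
  by_cases hne : t = T₀
  · subst hne
    obtain ⟨t', ht'K, ht'ne, ht'e⟩ := exists_other h htK het hec
    exact mem_edges.2 ⟨t', Finset.mem_erase.2 ⟨ht'ne, ht'K⟩, ht'e, hec⟩
  · exact mem_edges.2 ⟨t, Finset.mem_erase.2 ⟨hne, htK⟩, het, hec⟩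

lemma filter_erase_eq {K : Complex} {T₀ : Finset ℕ} (p : Finset ℕ → Prop)
    [DecidablePred p] : (K.erase T₀).filter p = (K.filter p).erase T₀ := by
  ext t
  simp only [Finset.mem_filter, Finset.mem_erase]
  tauto

lemma count_erase_sub {K : Complex} (h : IsClosedSurface K) {T₀ e : Finset ℕ}
    (hT : T₀ ∈ K) (he : e ⊆ T₀) (hc : e.card = 2) :
    ((K.erase T₀).filter (fun t => e ⊆ t)).card = 1 := by
  rw [filter_erase_eq, Finset.card_erase_of_mem (Finset.mem_filter.2 ⟨hT, he⟩),
    h.2 e (edge_mem hT he hc)]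

lemma count_erase_notsub {K : Complex} (h : IsClosedSurface K) {T₀ e : Finset ℕ}
    (he : ¬ e ⊆ T₀) (heK : e ∈ edges K) :
    ((K.erase T₀).filter (fun t => e ⊆ t)).card = 2 := by
  rw [filter_erase_eq, Finset.erase_eq_of_notMem (by simp [he]), h.2 e heK]

lemma pair_mem_bdry {K : Complex} (h : IsClosedSurface K) {T₀ e : Finset ℕ}
    (hT : T₀ ∈ K) (he : e ⊆ T₀) (hc : e.card = 2) :
    e ∈ bdryEdges (K.erase T₀) := by
  obtain ⟨t', ht'K, ht'ne, ht'e⟩ := exists_other h hT he hc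
  refine Finset.mem_filter.2 ⟨?_, count_erase_sub h hT he hc⟩
  exact edge_mem (Finset.mem_erase.2 ⟨ht'ne, ht'K⟩) ht'e hc

lemma bdry_erase_subset {K : Complex} (h : IsClosedSurface K) {T₀ e : Finset ℕ}
    (he : e ∈ bdryEdges (K.erase T₀)) : e ⊆ T₀ := by
  obtain ⟨heE, hcnt⟩ := Finset.mem_filter.1 he
  by_contra hns
  have heK : e ∈ edges K := edges_mono (Finset.erase_subset _ _) heE
  rw [count_erase_notsub h hns heK] at hcnt
  omega

lemma exists_edge_of_card3 {t : Finset ℕ} (h3 : t.card = 3) :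
    ∃ e ⊆ t, e.card = 2 := by
  obtain ⟨e, he, hc⟩ := Finset.exists_subset_card_eq (s := t) (n := 2) (by omega)
  exact ⟨e, he, hc⟩

lemma erase_nonempty {K : Complex} (h : IsClosedSurface K) {T₀ : Finset ℕ}
    (hT : T₀ ∈ K) : (K.erase T₀).Nonempty := by
  obtain ⟨e, he, hc⟩ := exists_edge_of_card3 (h.1.card3 T₀ hT)
  obtain ⟨t', ht'K, ht'ne, -⟩ := exists_other h hT he hc
  exact ⟨t', Finset.mem_erase.2 ⟨ht'ne, ht'K⟩⟩

lemma surface_erase {K : Complex} (h : IsClosedSurface K) {T₀ : Finset ℕ}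
    (hT : T₀ ∈ K) : IsSurface (K.erase T₀) where
  nonempty := erase_nonempty h hT
  card3 := fun t ht => h.1.card3 t (Finset.mem_of_mem_erase ht)
  edge_le := fun e he => by
    have : e ∈ edges K := edges_mono (Finset.erase_subset _ _) he
    calc ((K.erase T₀).filter (fun t => e ⊆ t)).card
        ≤ (K.filter (fun t => e ⊆ t)).card :=
          Finset.card_le_card (Finset.filter_subset_filter _ (Finset.erase_subset _ _))
      _ ≤ 2 := (h.2 e this).le
  link_conn := fun v t₁ h₁ t₂ h₂ hv₁ hv₂ => link_conn_erase h T₀ v h₁ h₂ hv₁ hv₂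
  conn := fun t₁ h₁ t₂ h₂ => conn_erase h hT h₁ h₂

lemma eulerChar_erase {K : Complex} (h : IsClosedSurface K) {T₀ : Finset ℕ}
    (hT : T₀ ∈ K) : eulerChar (K.erase T₀) = eulerChar K - 1 := by
  unfold eulerChar
  rw [vertices_erase h hT, edges_erase h hT, Finset.card_erase_of_mem hT]
  have : 1 ≤ K.card := Finset.card_pos.2 ⟨T₀, hT⟩
  push_cast [Nat.cast_sub this]
  ring

lemma disc_erase {K : Complex} (h : IsClosedSurface K) (hsph : eulerChar K = 2)
    {T₀ : Finset ℕ} (hT : T₀ ∈ K) : IsDisc (K.erase T₀) := by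
  refine ⟨surface_erase h hT, by rw [eulerChar_erase h hT, hsph]; ring, ?_⟩
  obtain ⟨e, he, hc⟩ := exists_edge_of_card3 (h.1.card3 T₀ hT)
  exact ⟨e, pair_mem_bdry h hT he hc⟩

lemma biUnion_pairs {t : Finset ℕ} (h3 : 2 ≤ t.card) :
    (t.powersetCard 2).biUnion id = t := by
  ext v
  simp only [Finset.mem_biUnion, id, Finset.mem_powersetCard]
  constructor
  · rintro ⟨e, ⟨het, -⟩, hve⟩
    exact het hve
  · intro hvt
    have herase : 1 ≤ (t.erase v).card := by
      rw [Finset.card_erase_of_mem hvt]; omega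
    obtain ⟨a, ha⟩ := Finset.card_pos.1 herase
    refine ⟨{v, a}, ⟨?_, ?_⟩, by simp⟩
    · intro z hz; simp only [Finset.mem_insert, Finset.mem_singleton] at hz
      rcases hz with rfl | rfl
      · exact hvt
      · exact Finset.mem_of_mem_erase ha
    · rw [Finset.card_insert_of_notMem
        (by simpa using (Finset.ne_of_mem_erase ha).symm), Finset.card_singleton]

lemma pairs_filter_image {t : Finset ℕ} {v : ℕ} (hvt : v ∈ t) :
    (t.powersetCard 2).filter (fun e => v ∈ e)
      = (t.erase v).image (fun w => {v, w}) := by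
  ext e
  simp only [Finset.mem_filter, Finset.mem_powersetCard, Finset.mem_image,
    Finset.mem_erase]
  constructor
  · rintro ⟨⟨het, hec⟩, hve⟩
    have h1 : (e.erase v).card = 1 := by rw [Finset.card_erase_of_mem hve, hec]
    obtain ⟨w, hw⟩ := Finset.card_eq_one.1 h1
    have hwmem : w ∈ e.erase v := by rw [hw]; simp
    refine ⟨w, ⟨Finset.ne_of_mem_erase hwmem, het (Finset.mem_of_mem_erase hwmem)⟩, ?_⟩
    rw [← Finset.insert_erase hve, hw]
  · rintro ⟨w, ⟨hwv, hwt⟩, rfl⟩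
    refine ⟨⟨?_, ?_⟩, by simp⟩
    · intro z hz; simp only [Finset.mem_insert, Finset.mem_singleton] at hz
      rcases hz with rfl | rfl
      · exact hvt
      · exact hwt
    · rw [Finset.card_insert_of_notMem (by simpa using hwv.symm), Finset.card_singleton]

lemma isCircle_pairs {t : Finset ℕ} (h3 : t.card = 3) :
    IsCircle (t.powersetCard 2) := by
  refine ⟨?_, ?_, ?_, ?_⟩
  · obtain ⟨e, he, hc⟩ := exists_edge_of_card3 h3
    exact ⟨e, Finset.mem_powersetCard.2 ⟨he, hc⟩⟩
  · exact fun e he => (Finset.mem_powersetCard.1 he).2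
  · intro v hv
    rw [biUnion_pairs (by omega)] at hv
    rw [pairs_filter_image hv, Finset.card_image_of_injOn, Finset.card_erase_of_mem hv, h3]
    intro w hw w' hw' heq
    have heq' : ({v, w} : Finset ℕ) = {v, w'} := heq
    have : w ∈ ({v, w'} : Finset ℕ) := by rw [← heq']; simp
    simp only [Finset.mem_insert, Finset.mem_singleton] at this
    rcases this with rfl | rfl
    · exact absurd rfl (Finset.ne_of_mem_erase hw)
    · rfl
  · intro e₁ he₁ e₂ he₂
    obtain ⟨hs₁, hc₁⟩ := Finset.mem_powersetCard.1 he₁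
    obtain ⟨hs₂, hc₂⟩ := Finset.mem_powersetCard.1 he₂
    refine Relation.ReflTransGen.single ⟨he₁, he₂, ?_⟩
    rw [← Finset.card_pos]
    have hsub : e₁ ∪ e₂ ⊆ t := Finset.union_subset hs₁ hs₂
    have h4 := Finset.card_union_add_card_inter e₁ e₂
    have := Finset.card_le_card hsub
    omega

/-- A triangulated circle has as many vertices as edges. -/
lemma circle_card_eq {E : Complex} (h : IsCircle E) :
    (E.biUnion id).card = E.card := by
  classical
  obtain ⟨-, hc2, hdeg, -⟩ := h
  set V := E.biUnion id with hV
  have key : ∑ e ∈ E, e.card = ∑ v ∈ V, (E.filter (fun e => v ∈ e)).card := by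
    have h1 : ∀ e ∈ E, e.card = ∑ v ∈ V, (if v ∈ e then 1 else 0) := by
      intro e he
      have he' : V.filter (fun v => v ∈ e) = e := by
        apply Finset.Subset.antisymm
        · intro v hv
          exact (Finset.mem_filter.1 hv).2
        · intro v hv
          exact Finset.mem_filter.2 ⟨Finset.mem_biUnion.2 ⟨e, he, hv⟩, hv⟩
      calc e.card = (V.filter (fun v => v ∈ e)).card := by rw [he']
        _ = _ := Finset.card_filter _ _
    rw [Finset.sum_congr rfl h1, Finset.sum_comm]
    exact Finset.sum_congr rfl fun v _ => (Finset.card_filter _ _).symm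
  have hleft : ∑ e ∈ E, e.card = 2 * E.card := by
    rw [Finset.sum_congr rfl hc2, Finset.sum_const, smul_eq_mul, mul_comm]
  have hright : ∑ v ∈ V, (E.filter (fun e => v ∈ e)).card = 2 * V.card := by
    rw [Finset.sum_congr rfl hdeg, Finset.sum_const, smul_eq_mul, mul_comm]
  rw [hleft, hright] at key
  omega

lemma vertices_singleton {t : Finset ℕ} : vertices {t} = t := by simp [vertices]

lemma edges_singleton {t : Finset ℕ} : edges {t} = t.powersetCard 2 := by simp [edges]

lemma surface_singleton {t : Finset ℕ} (h3 : t.card = 3) : IsSurface {t} where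
  nonempty := ⟨t, Finset.mem_singleton_self t⟩
  card3 := fun s hs => by rw [Finset.mem_singleton.1 hs]; exact h3
  edge_le := fun e _ => le_trans (Finset.card_le_card (Finset.filter_subset _ _)) (by simp)
  link_conn := fun v t₁ h₁ t₂ h₂ _ _ => by
    rw [Finset.mem_singleton.1 h₁, Finset.mem_singleton.1 h₂]
  conn := fun t₁ h₁ t₂ h₂ => by
    rw [Finset.mem_singleton.1 h₁, Finset.mem_singleton.1 h₂]

lemma eulerChar_singleton {t : Finset ℕ} (h3 : t.card = 3) : eulerChar {t} = 1 := by
  unfold eulerChar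
  rw [vertices_singleton, edges_singleton, Finset.card_powersetCard, h3,
    Finset.card_singleton]
  norm_num

lemma vertex_subset {K : Complex} {t : Finset ℕ} (ht : t ∈ K) : t ⊆ vertices K :=
  fun v hv => mem_vertices.2 ⟨t, ht, hv⟩

lemma circleInter_single {K : Complex} (h : IsClosedSurface K) {T₀ : Finset ℕ}
    (hT : T₀ ∈ K) : CircleInter {T₀} (K.erase T₀) := by
  have h3 := h.1.card3 T₀ hT
  have hE : edges {T₀} ∩ edges (K.erase T₀) = T₀.powersetCard 2 := by
    rw [edges_singleton, edges_erase h hT, Finset.inter_eq_left]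
    intro e he
    obtain ⟨hs, hc⟩ := Finset.mem_powersetCard.1 he
    exact edge_mem hT hs hc
  constructor
  · rw [hE]
    exact Or.inl (isCircle_pairs h3)
  · rw [hE, vertices_singleton, vertices_erase h hT, biUnion_pairs (by omega),
      Finset.inter_eq_left]
    exact vertex_subset hT

lemma decomp_single {K : Complex} (h : IsClosedSurface K) (hsph : eulerChar K = 2)
    {T₀ : Finset ℕ} (hT : T₀ ∈ K) {v : ℕ} (hvK : v ∈ vertices K) (hvT : v ∉ T₀)
    (hval : valence K v = mv K) :
    IsDecomp K {T₀} (K.erase T₀) ∅ where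
  closed := h
  subG := by simpa using hT
  subD := Finset.erase_subset _ _
  subDs := by simp
  surfG := surface_singleton (h.1.card3 T₀ hT)
  discD := disc_erase h hsph hT
  discDs := by simp
  maxv := by
    refine ⟨v, Finset.mem_sdiff.2 ⟨by rwa [vertices_erase h hT], ?_⟩, hval⟩
    intro hbd
    obtain ⟨e, heB, hve⟩ := Finset.mem_biUnion.1 hbd
    exact hvT (bdry_erase_subset h heB hve)
  cover := by
    rw [Finset.sup_empty]
    show ({T₀} ∪ K.erase T₀ ∪ ⊥ : Complex) = K
    rw [Finset.union_assoc]
    show ({T₀} ∪ (K.erase T₀ ∪ ∅) : Complex) = K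
    rw [Finset.union_empty]
    have : ({T₀} ∪ K.erase T₀ : Complex) = insert T₀ (K.erase T₀) := by
      ext s; simp [or_comm]
    rw [this, Finset.insert_erase hT]
  disjGD := by simp
  disjGDs := by simp
  disjDDs := by simp
  disjDsDs := by simp
  interGD := circleInter_single h hT
  interGDs := by simp
  interDDs := by simp
  interDsDs := by simp

lemma exists_max {K : Complex} (h : IsClosedSurface K) :
    ∃ v ∈ vertices K, valence K v = mv K ∧ ∃ T ∈ K, v ∉ T := by
  obtain ⟨t0, ht0⟩ := h.1.nonempty
  have h3 := h.1.card3 t0 ht0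
  have hVne : (vertices K).Nonempty := by
    obtain ⟨w, hw⟩ := Finset.card_pos.1 (by omega : 0 < t0.card)
    exact ⟨w, mem_vertices.2 ⟨t0, ht0, hw⟩⟩
  obtain ⟨v, hv, hsup⟩ := Finset.exists_mem_eq_sup (vertices K) hVne (valence K)
  refine ⟨v, hv, hsup.symm, ?_⟩
  by_contra hall
  push_neg at hall
  obtain ⟨t, htK, hvt⟩ := mem_vertices.1 hv
  have hec : (t.erase v).card = 2 := by rw [Finset.card_erase_of_mem hvt, h.1.card3 t htK]
  obtain ⟨t', ht'K, ht'ne, ht'e⟩ := exists_other h htK (Finset.erase_subset _ _) hec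
  have hvt' : v ∈ t' := hall t' ht'K
  have hsub : t ⊆ t' := by
    conv_lhs => rw [← Finset.insert_erase hvt]
    exact Finset.insert_subset hvt' ht'e
  exact ht'ne (Finset.eq_of_subset_of_card_le hsub
    (by rw [h.1.card3 t htK, h.1.card3 t' ht'K])).symm

lemma sum_card_eq_sum_count {β γ : Type*} [DecidableEq β] [DecidableEq γ]
    (s : Finset β) (U : Finset γ) (A : β → Finset γ) (hA : ∀ b ∈ s, A b ⊆ U) :
    ∑ b ∈ s, (A b).card = ∑ u ∈ U, (s.filter (fun b => u ∈ A b)).card := by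
  classical
  have h1 : ∀ b ∈ s, (A b).card = ∑ u ∈ U, (if u ∈ A b then 1 else 0) := by
    intro b hb
    have he' : U.filter (fun u => u ∈ A b) = A b :=
      Finset.Subset.antisymm (fun u hu => (Finset.mem_filter.1 hu).2)
        (fun u hu => Finset.mem_filter.2 ⟨hA b hb hu, hu⟩)
    calc (A b).card = (U.filter (fun u => u ∈ A b)).card := by rw [he']
      _ = _ := Finset.card_filter _ _
  rw [Finset.sum_congr rfl h1, Finset.sum_comm]
  exact Finset.sum_congr rfl fun u _ => (Finset.card_filter _ _).symm

lemma sum_inter_offDiag {β γ : Type*} [DecidableEq β] [DecidableEq γ]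
    (s : Finset β) (U : Finset γ) (A : β → Finset γ) (hA : ∀ b ∈ s, A b ⊆ U) :
    ∑ p ∈ s.offDiag, (A p.1 ∩ A p.2).card
      = ∑ u ∈ U, ((s.filter (fun b => u ∈ A b)).card * (s.filter (fun b => u ∈ A b)).card
          - (s.filter (fun b => u ∈ A b)).card) := by
  classical
  have h1 : ∀ p ∈ s.offDiag, (A p.1 ∩ A p.2).card
      = ∑ u ∈ U, (if u ∈ A p.1 ∧ u ∈ A p.2 then 1 else 0) := by
    intro p hp
    obtain ⟨hp1, hp2, -⟩ := Finset.mem_offDiag.1 hp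
    have he' : U.filter (fun u => u ∈ A p.1 ∧ u ∈ A p.2) = A p.1 ∩ A p.2 := by
      ext u
      simp only [Finset.mem_filter, Finset.mem_inter]
      exact ⟨fun h => h.2, fun h => ⟨hA _ hp1 h.1, h⟩⟩
    calc (A p.1 ∩ A p.2).card
        = (U.filter (fun u => u ∈ A p.1 ∧ u ∈ A p.2)).card := by rw [he']
      _ = _ := Finset.card_filter _ _
  rw [Finset.sum_congr rfl h1, Finset.sum_comm]
  refine Finset.sum_congr rfl fun u _ => ?_
  have hEq : (s.offDiag.filter (fun p => u ∈ A p.1 ∧ u ∈ A p.2))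
      = (s.filter (fun b => u ∈ A b)).offDiag := by
    ext p
    simp only [Finset.mem_filter, Finset.mem_offDiag]
    tauto
  rw [← Finset.card_filter, hEq, Finset.offDiag_card]

lemma circleInter_card {A B : Complex} (h : CircleInter A B) :
    (vertices A ∩ vertices B).card = (edges A ∩ edges B).card := by
  rcases h.1 with hc | hc
  · rw [h.2, circle_card_eq hc]
  · rw [h.2, hc]
    simp

lemma Ds_empty {K G D : Complex} {Ds : Finset Complex} (hd : IsDecomp K G D Ds)
    (hsph : eulerChar K = 2) (hχG : eulerChar G = 1) : Ds = ∅ := by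
  classical
  have hGne := hd.surfG.nonempty
  have hDne := hd.discD.1.nonempty
  have hGD : G ≠ D := fun hEq => hDne.ne_empty (by
    have := disjoint_self.1 (hEq ▸ hd.disjGD); simpa using this)
  have hGinDs : G ∉ Ds := fun hm => hGne.ne_empty (by
    have := disjoint_self.1 (hd.disjGDs G hm); simpa using this)
  have hDinDs : D ∉ Ds := fun hm => hDne.ne_empty (by
    have := disjoint_self.1 (hd.disjDDs D hm); simpa using this)
  set pieces : Finset Complex := insert G (insert D Ds) with hpieces
  have hPcard : pieces.card = Ds.card + 2 := by
    rw [hpieces, Finset.card_insert_of_notMem (by simp [hGD, hGinDs]),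
      Finset.card_insert_of_notMem hDinDs]
  have hsub : ∀ P ∈ pieces, P ⊆ K := by
    intro P hP
    simp only [hpieces, Finset.mem_insert] at hP
    rcases hP with rfl | rfl | hP
    · exact hd.subG
    · exact hd.subD
    · exact hd.subDs P hP
  have hchi : ∀ P ∈ pieces, eulerChar P = 1 := by
    intro P hP
    simp only [hpieces, Finset.mem_insert] at hP
    rcases hP with rfl | rfl | hP
    · exact hχG
    · exact hd.discD.2.1
    · exact (hd.discDs P hP).2.1
  have hdisj : ∀ P ∈ pieces, ∀ Q ∈ pieces, P ≠ Q → Disjoint (id P) (id Q) := by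
    intro P hP Q hQ hne
    simp only [hpieces, Finset.mem_insert] at hP hQ
    simp only [id]
    rcases hP with rfl | rfl | hP <;> rcases hQ with rfl | rfl | hQ
    · exact absurd rfl hne
    · exact hd.disjGD
    · exact hd.disjGDs Q hQ
    · exact hd.disjGD.symm
    · exact absurd rfl hne
    · exact hd.disjDDs Q hQ
    · exact (hd.disjGDs P hP).symm
    · exact (hd.disjDDs P hP).symm
    · exact hd.disjDsDs P hP Q hQ hne
  have hcirc : ∀ P ∈ pieces, ∀ Q ∈ pieces, P ≠ Q →
      (vertices P ∩ vertices Q).card = (edges P ∩ edges Q).card := by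
    have hsymm : ∀ {A B : Complex}, CircleInter A B →
        (vertices B ∩ vertices A).card = (edges B ∩ edges A).card := by
      intro A B hAB
      rw [Finset.inter_comm, circleInter_card hAB, Finset.inter_comm]
    intro P hP Q hQ hne
    simp only [hpieces, Finset.mem_insert] at hP hQ
    rcases hP with rfl | rfl | hP <;> rcases hQ with rfl | rfl | hQ
    · exact absurd rfl hne
    · exact circleInter_card hd.interGD
    · exact circleInter_card (hd.interGDs Q hQ)
    · exact hsymm hd.interGD
    · exact absurd rfl hne
    · exact circleInter_card (hd.interDDs Q hQ)
    · exact hsymm (hd.interGDs P hP)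
    · exact hsymm (hd.interDDs P hP)
    · exact circleInter_card (hd.interDsDs P hP Q hQ hne)
  have hKsup : pieces.sup id = K := by
    rw [hpieces, Finset.sup_insert, Finset.sup_insert, id, id]
    have := hd.cover
    rw [Finset.union_assoc] at this
    exact this
  set m : ℕ → ℕ := fun v => (pieces.filter (fun P => v ∈ vertices P)).card with hm
  set pc : Finset ℕ → ℕ := fun e => (pieces.filter (fun P => e ∈ edges P)).card with hpc
  have hS1 : ∑ P ∈ pieces, (vertices P).card = ∑ v ∈ vertices K, m v :=
    sum_card_eq_sum_count _ _ _ (fun P hP => vertices_mono (hsub P hP))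
  have hS2 : ∑ P ∈ pieces, (edges P).card = ∑ e ∈ edges K, pc e :=
    sum_card_eq_sum_count _ _ _ (fun P hP => edges_mono (hsub P hP))
  have hS3 : ∑ P ∈ pieces, P.card = K.card := by
    have hbi : pieces.biUnion id = K := by rw [← Finset.sup_eq_biUnion, hKsup]
    rw [← hbi]
    exact (Finset.card_biUnion hdisj).symm
  have hm1 : ∀ v ∈ vertices K, 1 ≤ m v := by
    intro v hv
    obtain ⟨t, htK, hvt⟩ := mem_vertices.1 hv
    have ht' : t ∈ pieces.sup id := by rw [hKsup]; exact htK
    obtain ⟨P, hP, htP⟩ := Finset.mem_sup.1 ht'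
    exact Finset.card_pos.2 ⟨P, Finset.mem_filter.2 ⟨hP, mem_vertices.2 ⟨t, htP, hvt⟩⟩⟩
  have hpc1 : ∀ e ∈ edges K, 1 ≤ pc e := by
    intro e he
    obtain ⟨t, htK, het, hec⟩ := mem_edges.1 he
    have ht' : t ∈ pieces.sup id := by rw [hKsup]; exact htK
    obtain ⟨P, hP, htP⟩ := Finset.mem_sup.1 ht'
    exact Finset.card_pos.2 ⟨P, Finset.mem_filter.2 ⟨hP, edge_mem htP het hec⟩⟩
  have hpc2 : ∀ e ∈ edges K, pc e ≤ 2 := by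
    intro e he
    set f : Complex → Finset ℕ :=
      fun P => if h : ∃ t, t ∈ P ∧ e ⊆ t ∧ e.card = 2 then h.choose else ∅ with hf
    have hfspec : ∀ P, e ∈ edges P → f P ∈ P ∧ e ⊆ f P := by
      intro P heP
      obtain ⟨t, ht, hsub', hc⟩ := mem_edges.1 heP
      have hex : ∃ t, t ∈ P ∧ e ⊆ t ∧ e.card = 2 := ⟨t, ht, hsub', hc⟩
      rw [hf]
      simp only [dif_pos hex]
      exact ⟨hex.choose_spec.1, hex.choose_spec.2.1⟩
    have hle : (pieces.filter (fun P => e ∈ edges P)).card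
        ≤ (K.filter (fun t => e ⊆ t)).card := by
      apply Finset.card_le_card_of_injOn f
      · intro P hP
        obtain ⟨hPp, heP⟩ := Finset.mem_filter.1 hP
        obtain ⟨h1, h2⟩ := hfspec P heP
        exact Finset.mem_filter.2 ⟨hsub P hPp h1, h2⟩
      · intro P hP Q hQ hEq
        obtain ⟨hPp, hePf⟩ := Finset.mem_filter.1 (Finset.mem_coe.1 hP)
        obtain ⟨hQp, heQf⟩ := Finset.mem_filter.1 (Finset.mem_coe.1 hQ)
        by_contra hne
        have hdj := hdisj P hPp Q hQp hne
        exact (Finset.disjoint_left.1 hdj (hfspec P hePf).1)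
          (hEq ▸ (hfspec Q heQf).1)
    calc pc e ≤ (K.filter (fun t => e ⊆ t)).card := hle
      _ = 2 := hd.closed.2 e he
  have hoffV : ∑ p ∈ pieces.offDiag, (vertices p.1 ∩ vertices p.2).card
      = ∑ v ∈ vertices K, (m v * m v - m v) :=
    sum_inter_offDiag _ _ _ (fun P hP => vertices_mono (hsub P hP))
  have hoffE : ∑ p ∈ pieces.offDiag, (edges p.1 ∩ edges p.2).card
      = ∑ e ∈ edges K, (pc e * pc e - pc e) :=
    sum_inter_offDiag _ _ _ (fun P hP => edges_mono (hsub P hP))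
  have hVE : ∑ v ∈ vertices K, (m v * m v - m v)
      = ∑ e ∈ edges K, (pc e * pc e - pc e) := by
    rw [← hoffV, ← hoffE]
    refine Finset.sum_congr rfl fun p hp => ?_
    obtain ⟨h1, h2, hne⟩ := Finset.mem_offDiag.1 hp
    exact hcirc p.1 h1 p.2 h2 hne
  have hEptw : ∀ e ∈ edges K, pc e * pc e - pc e = 2 * (pc e - 1) := by
    intro e he
    have h1 := hpc1 e he
    have h2 := hpc2 e he
    have : pc e = 1 ∨ pc e = 2 := by omega
    rcases this with h | h <;> rw [h]
  have hVptw : ∀ v ∈ vertices K, 2 * (m v - 1) ≤ m v * m v - m v := by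
    intro v hv
    obtain ⟨k, hk⟩ := Nat.exists_eq_add_of_le (hm1 v hv)
    rw [hk]
    have hkk : k ≤ k * k := by
      cases k with
      | zero => simp
      | succ j => exact Nat.le_mul_of_pos_left _ (Nat.succ_pos j)
    have hexpand : (1 + k) * (1 + k) = 1 + 2 * k + k * k := by ring
    omega
  have hD : ∑ v ∈ vertices K, (m v - 1) ≤ ∑ e ∈ edges K, (pc e - 1) := by
    have hle1 : 2 * ∑ v ∈ vertices K, (m v - 1) ≤ ∑ v ∈ vertices K, (m v * m v - m v) := by
      rw [Finset.mul_sum]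
      exact Finset.sum_le_sum hVptw
    have heq2 : ∑ e ∈ edges K, (pc e * pc e - pc e) = 2 * ∑ e ∈ edges K, (pc e - 1) := by
      rw [Finset.mul_sum]
      exact Finset.sum_congr rfl hEptw
    rw [hVE, heq2] at hle1
    omega
  -- Euler characteristic bookkeeping over ℤ
  have hexp : ∑ P ∈ pieces, eulerChar P
      = ((∑ P ∈ pieces, (vertices P).card : ℕ) : ℤ)
        - ((∑ P ∈ pieces, (edges P).card : ℕ) : ℤ)
        + ((∑ P ∈ pieces, P.card : ℕ) : ℤ) := by
    unfold eulerChar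
    push_cast
    rw [Finset.sum_add_distrib, Finset.sum_sub_distrib]
  have hsumχ : ∑ P ∈ pieces, eulerChar P = (Ds.card : ℤ) + 2 := by
    rw [Finset.sum_congr rfl hchi, Finset.sum_const, hPcard]
    push_cast
    ring
  rw [hexp, hS1, hS2, hS3] at hsumχ
  have hB : ((vertices K).card : ℤ) - (edges K).card + K.card = 2 := hsph
  have hC1 : ((∑ v ∈ vertices K, (m v - 1) : ℕ) : ℤ)
      = ((∑ v ∈ vertices K, m v : ℕ) : ℤ) - (vertices K).card := by
    push_cast
    rw [Finset.sum_congr rfl (fun v hv => Nat.cast_sub (hm1 v hv)), Finset.sum_sub_distrib]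
    simp
  have hC2 : ((∑ e ∈ edges K, (pc e - 1) : ℕ) : ℤ)
      = ((∑ e ∈ edges K, pc e : ℕ) : ℤ) - (edges K).card := by
    push_cast
    rw [Finset.sum_congr rfl (fun e he => Nat.cast_sub (hpc1 e he)), Finset.sum_sub_distrib]
    simp
  have hDz : ((∑ v ∈ vertices K, (m v - 1) : ℕ) : ℤ)
      ≤ ((∑ e ∈ edges K, (pc e - 1) : ℕ) : ℤ) := Nat.cast_le.2 hD
  rw [hC1, hC2] at hDz
  have hfinal : (Ds.card : ℤ) ≤ 0 := by omega
  have : Ds.card = 0 := by exact_mod_cast le_antisymm hfinal (by positivity)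
  exact Finset.card_eq_zero.1 this
/-- the minimal decompositions of a triangulated sphere are
exactly those of the form ({T₀}, T \ {T₀}, ∅) with a maximal-valence vertex
outside T₀. -/
theorem sphere_minimal_decompositions (K : Complex) (h : IsClosedSurface K)
    (hsph : eulerChar K = 2) (G D : Complex) (Ds : Finset Complex) :
    IsMinDecomp K G D Ds ↔
      ∃ T₀ ∈ K, G = {T₀} ∧ D = K.erase T₀ ∧ Ds = ∅ ∧
        ∃ v ∈ vertices K, v ∉ T₀ ∧ valence K v = mv K := by
  constructor
  · rintro ⟨hdec, hmin⟩
    obtain ⟨v₀, hv₀K, hval₀, T', hT'K, hv₀T'⟩ := exists_max h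
    have hcomp := decomp_single h hsph hT'K hv₀K hv₀T' hval₀
    have hGcard : G.card ≤ 1 := by simpa using hmin {T'} (K.erase T') ∅ hcomp
    have hGne := hdec.surfG.nonempty
    have hG1 : G.card = 1 := le_antisymm hGcard (Finset.card_pos.2 hGne)
    obtain ⟨T₀, hGT⟩ := Finset.card_eq_one.1 hG1
    have hT₀K : T₀ ∈ K := hdec.subG (by rw [hGT]; exact Finset.mem_singleton_self T₀)
    have hχG : eulerChar G = 1 := by
      rw [hGT]; exact eulerChar_singleton (h.1.card3 T₀ hT₀K)
    have hDs : Ds = ∅ := Ds_empty hdec hsph hχG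
    have hcover := hdec.cover
    rw [hDs] at hcover
    have hDK : D = K.erase T₀ := by
      ext t
      constructor
      · intro ht
        refine Finset.mem_erase.2 ⟨?_, hdec.subD ht⟩
        rintro rfl
        exact (Finset.disjoint_right.1 hdec.disjGD ht)
          (by rw [hGT]; exact Finset.mem_singleton_self t)
      · intro ht
        obtain ⟨htne, htK⟩ := Finset.mem_erase.1 ht
        have hmem : t ∈ G ∪ D ∪ (∅ : Finset Complex).sup id := by
          rw [hcover]; exact htK
        rw [Finset.sup_empty] at hmem
        have hmem' : t ∈ G ∪ D := by simpa using hmem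
        rcases Finset.mem_union.1 hmem' with hG' | hD'
        · rw [hGT] at hG'
          exact absurd (Finset.mem_singleton.1 hG') htne
        · exact hD'
    obtain ⟨v, hvInt, hval⟩ := hdec.maxv
    rw [hDK] at hvInt
    simp only [intVertices] at hvInt
    obtain ⟨hvV, hvB⟩ := Finset.mem_sdiff.1 hvInt
    refine ⟨T₀, hT₀K, hGT, hDK, hDs, v, ?_, ?_, hval⟩
    · rw [vertices_erase h hT₀K] at hvV; exact hvV
    · intro hvT₀
      have h3 := h.1.card3 T₀ hT₀K
      have hpos : 0 < (T₀.erase v).card := by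
        rw [Finset.card_erase_of_mem hvT₀, h3]; omega
      obtain ⟨a, ha⟩ := Finset.card_pos.1 hpos
      have hsubp : ({v, a} : Finset ℕ) ⊆ T₀ := by
        intro z hz
        simp only [Finset.mem_insert, Finset.mem_singleton] at hz
        rcases hz with rfl | rfl
        · exact hvT₀
        · exact Finset.mem_of_mem_erase ha
      have hcp : ({v, a} : Finset ℕ).card = 2 := by
        rw [Finset.card_insert_of_notMem
          (by simpa using (Finset.ne_of_mem_erase ha).symm), Finset.card_singleton]
      exact hvB (Finset.mem_biUnion.2
        ⟨{v, a}, pair_mem_bdry h hT₀K hsubp hcp, by simp⟩)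
  · rintro ⟨T₀, hT₀K, hGT, hDK, hDs, v, hvK, hvT, hval⟩
    subst hGT hDK hDs
    refine ⟨decomp_single h hsph hT₀K hvK hvT hval, ?_⟩
    intro G' D' Ds' hdec'
    rw [Finset.card_singleton]
    exact Finset.card_pos.2 hdec'.surfG.nonempty

end Tri
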